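/- Let μ ∈ {1,−1} and n ≥ 1. Let Ω(μ,n) be the n×n matrix with entries x_{i,j} given by: x_{i,j} = 0 if i > j; x_{i,n} = 0 for i ≠ n; x_{n,n} = 1; x_{i,i} = (−1)^{n−i} μ^{−2(n−i)}; and x_{i,j} = (−1)^{n−i} C(n−i−1, j−i) μ^{−2n+i+j} for i < j, j ≠ n. Then Ω(μ,n) is an involution in GL(n,ℂ), i.e. (Ω(μ,n))² is the identity matrix. -/

import Mathlib

/-- The matrix `Ω(λ, n)` (indices `1, …, n` in the paper correspond to `0, …, n-1` here):
`x_{i,j} = 0` for `i > j`; `x_{i,n} = 0` for `i ≠ n`; `x_{n,n} = 1`;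
`x_{i,i} = (-1)^{n-i} λ^{-2(n-i)}`; and
`x_{i,j} = (-1)^{n-i} C(n-i-1, j-i) λ^{-2n+i+j}` for `i < j`, `j ≠ n`. -/
noncomputable def Omega (lam : ℂ) (n : ℕ) : Matrix (Fin n) (Fin n) ℂ :=
  Matrix.of fun i j =>
    if (j : ℕ) < (i : ℕ) then 0
    else if i = j then (-1 : ℂ) ^ (n - 1 - (i : ℕ)) * lam ^ (-(2 * ((n : ℤ) - 1 - (i : ℕ))))
    else if (j : ℕ) = n - 1 then 0
    else (-1 : ℂ) ^ (n - 1 - (i : ℕ)) * ((n - 2 - (i : ℕ)).choose ((j : ℕ) - (i : ℕ))) *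
      lam ^ ((i : ℤ) + (j : ℕ) + 2 - 2 * n)

/-- Uniform closed form for the entries of `Omega` when `μ² = 1`. -/
noncomputable def gOm (mu : ℂ) (n : ℕ) (i j : ℕ) : ℂ :=
  if j < i then 0
  else (-1 : ℂ) ^ (n - 1 - i) * ((n - 2 - i).choose (j - i)) * mu ^ (i + j)

lemma alt_sum_aux (N K : ℕ) (hKN : K ≤ N) :
    ∑ m ∈ Finset.range (K + 1),
      (-1 : ℂ) ^ m * (N.choose m) * ((N - m).choose (K - m))
      = if K = 0 then 1 else 0 := by
  have h : ∑ m ∈ Finset.range (K + 1),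
      (-1 : ℂ) ^ m * (N.choose m) * ((N - m).choose (K - m))
      = (N.choose K : ℂ) * ∑ m ∈ Finset.range (K + 1), (-1 : ℂ) ^ m * (K.choose m) := by
    rw [Finset.mul_sum]
    refine Finset.sum_congr rfl fun m hm => ?_
    rw [Finset.mem_range, Nat.lt_succ_iff] at hm
    have key := Nat.choose_mul (n := N) hm
    have h2 : (N.choose m : ℂ) * ((N - m).choose (K - m))
        = (N.choose K : ℂ) * (K.choose m) := by
      rw [← Nat.cast_mul, ← Nat.cast_mul, ← key]
    calc (-1 : ℂ) ^ m * (N.choose m) * ((N - m).choose (K - m))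
        = (-1 : ℂ) ^ m * ((N.choose m : ℂ) * ((N - m).choose (K - m))) := by ring
      _ = (-1 : ℂ) ^ m * ((N.choose K : ℂ) * (K.choose m)) := by rw [h2]
      _ = (N.choose K : ℂ) * ((-1 : ℂ) ^ m * (K.choose m)) := by ring
  rw [h]
  by_cases hK : K = 0
  · subst hK; simp
  · rw [if_neg hK]
    have hz := Int.alternating_sum_range_choose_of_ne hK
    have hzc := congrArg (fun z : ℤ => (z : ℂ)) hz
    push_cast at hzc
    rw [hzc, mul_zero]

lemma omega_eq_gOm {n : ℕ} {mu : ℂ} (hmu2 : mu ^ 2 = 1) (hmu0 : mu ≠ 0) (a b : Fin n) :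
    Omega mu n a b = gOm mu n a b := by
  have heven : ∀ t : ℤ, mu ^ (2 * t) = 1 := by
    intro t
    rw [zpow_mul, show (2 : ℤ) = ((2 : ℕ) : ℤ) by norm_num, zpow_natCast, hmu2, one_zpow]
  have hevenn : ∀ t : ℕ, mu ^ (2 * t) = 1 := by
    intro t; rw [pow_mul, hmu2, one_pow]
  unfold Omega gOm
  simp only [Matrix.of_apply]
  by_cases h1 : (b : ℕ) < (a : ℕ)
  · simp [h1]
  · rw [if_neg h1, if_neg h1]
    by_cases h2 : a = b
    · rw [if_pos h2]
      subst h2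
      rw [Nat.sub_self, Nat.choose_zero_right, Nat.cast_one,
        show (-(2 * ((n : ℤ) - 1 - (a : ℕ)))) = 2 * (-(((n : ℤ) - 1 - (a : ℕ)))) by ring,
        heven, show (a : ℕ) + (a : ℕ) = 2 * (a : ℕ) by ring, hevenn]
      ring
    · rw [if_neg h2]
      have hab : (a : ℕ) < (b : ℕ) := by
        rcases lt_or_eq_of_le (not_lt.mp h1) with h | h
        · exact h
        · exact absurd (Fin.ext h) h2
      by_cases h3 : (b : ℕ) = n - 1
      · rw [if_pos h3]
        have hbn := b.isLt
        have hcz : (n - 2 - (a : ℕ)).choose ((b : ℕ) - (a : ℕ)) = 0 := by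
          apply Nat.choose_eq_zero_of_lt; omega
        rw [hcz]
        simp
      · rw [if_neg h3]
        rw [show (a : ℤ) + (b : ℕ) + 2 - 2 * n
              = (((a : ℕ) + (b : ℕ) : ℕ) : ℤ) + 2 * (1 - (n : ℤ)) by push_cast; ring,
          zpow_add₀ hmu0, zpow_natCast, heven, mul_one]

lemma core_sum {n : ℕ} {mu : ℂ} (hmu2 : mu ^ 2 = 1) (i k : ℕ) (hi : i < n) (hk : k < n) :
    ∑ j ∈ Finset.range n, gOm mu n i j * gOm mu n j k
      = if i = k then 1 else 0 := by
  have hevenn : ∀ t : ℕ, mu ^ (2 * t) = 1 := by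
    intro t; rw [pow_mul, hmu2, one_pow]
  rcases lt_trichotomy k i with h | h | h
  · -- k < i : all terms vanish
    rw [if_neg (by omega)]
    refine Finset.sum_eq_zero fun j hj => ?_
    unfold gOm
    by_cases hji : j < i
    · rw [if_pos hji, zero_mul]
    · rw [if_pos (show k < j by omega), mul_zero]
  · -- i = k : only the diagonal term survives
    subst h
    rw [if_pos rfl]
    rw [Finset.sum_eq_single_of_mem k (Finset.mem_range.mpr hk)]
    · unfold gOm
      rw [if_neg (lt_irrefl k), Nat.sub_self, Nat.choose_zero_right, Nat.cast_one,
        show k + k = 2 * k by ring, hevenn]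
      have h2 : ((-1 : ℂ) ^ (n - 1 - k)) ^ 2 = 1 := by
        rw [← pow_mul, mul_comm, pow_mul]; norm_num
      calc (-1 : ℂ) ^ (n - 1 - k) * 1 * 1 * ((-1 : ℂ) ^ (n - 1 - k) * 1 * 1)
          = ((-1 : ℂ) ^ (n - 1 - k)) ^ 2 := by ring
        _ = 1 := h2
    · intro j hj hji
      unfold gOm
      rcases lt_or_gt_of_ne hji with h' | h'
      · rw [if_pos h', zero_mul]
      · rw [if_pos (show k < j from h'), mul_zero]
  · -- i < k
    rw [if_neg (by omega)]
    by_cases hk2 : k = n - 1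
    · -- last column: all terms vanish
      refine Finset.sum_eq_zero fun j hj => ?_
      rw [Finset.mem_range] at hj
      unfold gOm
      by_cases hji : j < i
      · rw [if_pos hji, zero_mul]
      · rw [if_neg hji]
        by_cases hjk : k < j
        · rw [if_pos hjk, mul_zero]
        · rw [if_neg hjk]
          by_cases hjk2 : j = k
          · subst hjk2
            have : (n - 2 - i).choose (j - i) = 0 := by
              apply Nat.choose_eq_zero_of_lt; omega
            rw [this]; simp
          · have : (n - 2 - j).choose (k - j) = 0 := by
              apply Nat.choose_eq_zero_of_lt; omega
            rw [this]; simp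
    · -- main case : i < k ≤ n - 2
      have hkn2 : k ≤ n - 2 := by omega
      have hKN : k - i ≤ n - 2 - i := by omega
      have hstep : ∑ j ∈ Finset.range n, gOm mu n i j * gOm mu n j k
          = ∑ j ∈ Finset.Ico i (k + 1), gOm mu n i j * gOm mu n j k := by
        symm
        apply Finset.sum_subset
        · intro x hx
          rw [Finset.mem_Ico] at hx
          rw [Finset.mem_range]
          omega
        · intro x hx hx'
          rw [Finset.mem_range] at hx
          rw [Finset.mem_Ico] at hx'
          push_neg at hx'
          unfold gOm
          by_cases hxi : x < i
          · rw [if_pos hxi, zero_mul]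
          · rw [if_pos (show k < x by omega), mul_zero]
      rw [hstep, Finset.sum_Ico_eq_sum_range,
        show k + 1 - i = (k - i) + 1 by omega]
      have hterm : ∀ m ∈ Finset.range ((k - i) + 1),
          gOm mu n i (i + m) * gOm mu n (i + m) k
            = ((-1 : ℂ) ^ m * ((n - 2 - i).choose m) *
                (((n - 2 - i) - m).choose ((k - i) - m))) * mu ^ (i + k) := by
        intro m hm
        rw [Finset.mem_range, Nat.lt_succ_iff] at hm
        unfold gOm
        rw [if_neg (by omega : ¬ i + m < i), if_neg (by omega : ¬ k < i + m),
          show i + m - i = m by omega,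
          show n - 2 - (i + m) = (n - 2 - i) - m by omega,
          show k - (i + m) = (k - i) - m by omega]
        have hsign : (-1 : ℂ) ^ (n - 1 - i) * (-1 : ℂ) ^ (n - 1 - (i + m))
            = (-1 : ℂ) ^ m := by
          rw [← pow_add,
            show (n - 1 - i) + (n - 1 - (i + m)) = 2 * (n - 1 - (i + m)) + m by omega,
            pow_add, pow_mul]
          norm_num
        have hmupow : mu ^ (i + (i + m)) * mu ^ ((i + m) + k) = mu ^ (i + k) := by
          rw [← pow_add, show (i + (i + m)) + ((i + m) + k) = 2 * (i + m) + (i + k) by ring,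
            pow_add, hevenn, one_mul]
        calc ((-1 : ℂ) ^ (n - 1 - i) * (((n - 2 - i)).choose m) * mu ^ (i + (i + m))) *
              ((-1 : ℂ) ^ (n - 1 - (i + m)) * ((((n - 2 - i) - m)).choose ((k - i) - m)) *
                mu ^ ((i + m) + k))
            = ((-1 : ℂ) ^ (n - 1 - i) * (-1 : ℂ) ^ (n - 1 - (i + m))) *
                (mu ^ (i + (i + m)) * mu ^ ((i + m) + k)) *
                (((n - 2 - i).choose m : ℂ) * ((((n - 2 - i) - m)).choose ((k - i) - m))) := by
              ring
          _ = (-1 : ℂ) ^ m * mu ^ (i + k) *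
                (((n - 2 - i).choose m : ℂ) * ((((n - 2 - i) - m)).choose ((k - i) - m))) := by
              rw [hsign, hmupow]
          _ = ((-1 : ℂ) ^ m * ((n - 2 - i).choose m) *
                (((n - 2 - i) - m).choose ((k - i) - m))) * mu ^ (i + k) := by ring
      rw [Finset.sum_congr rfl hterm, ← Finset.sum_mul, alt_sum_aux (n - 2 - i) (k - i) hKN,
        if_neg (by omega : ¬ k - i = 0), zero_mul]

/-- For `μ ∈ {1, -1}`, the matrix `Ω(μ, n)` is an involution: `Ω(μ,n)² = Iₙ`. -/
theorem omega_involution {n : ℕ} (hn : 1 ≤ n) (mu : ℂ) (hmu : mu = 1 ∨ mu = -1) :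
    Omega mu n * Omega mu n = 1 := by
  have hmu2 : mu ^ 2 = 1 := by rcases hmu with h | h <;> rw [h] <;> ring
  have hmu0 : mu ≠ 0 := by rcases hmu with h | h <;> rw [h] <;> norm_num
  ext i k
  rw [Matrix.mul_apply]
  simp_rw [omega_eq_gOm hmu2 hmu0]
  rw [Fin.sum_univ_eq_sum_range (fun j => gOm mu n i j * gOm mu n j k) n,
    core_sum hmu2 i k i.isLt k.isLt, Matrix.one_apply]
  simp only [Fin.val_eq_val]
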